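/- The feasibility region FR = {(⟨f, L f⟩, ⟨f̂, L f̂⟩) : ‖f‖ = 1} is a convex subset of ℝ² when N ≥ 3. -/
import Mathlib


open Matrix BigOperators

/-- A simple (loopless, undirected) connected weighted graph on `N` vertices,
presented via its weight function. -/
structure GraphLaplacian (N : ℕ) where
  w : Fin N → Fin N → ℝ
  symm : ∀ i j, w i j = w j i
  nonneg : ∀ i j, 0 ≤ w i j
  loopless : ∀ i, w i i = 0
  connected : ∀ i j : Fin N, Relation.ReflTransGen (fun a b => 0 < w a b) i j

/-- The graph Laplacian `L = D - A`. -/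
def GraphLaplacian.L {N : ℕ} (G : GraphLaplacian N) : Matrix (Fin N) (Fin N) ℝ :=
  fun i j => if i = j then ∑ k, G.w i k else -G.w i j

section BrickmanMachinery

def Tset {n : ℕ} (d : Fin n → ℝ) : Set (Fin n → ℝ) :=
  {z | ∑ i, z i ^ 2 = 1 ∧ ∑ i, d i * z i ^ 2 = 0}

lemma seg {n : ℕ} (d : Fin n → ℝ) (v w : Fin n → ℝ)
    (hv : v ∈ Tset d) (hw : w ∈ Tset d) (hsign : ∀ i, 0 ≤ v i * w i) :
    JoinedIn (Tset d) v w := by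
  classical
  set s : Fin n → ℝ := fun i => if v i + w i < 0 then -1 else 1 with hs
  set z : ℝ → Fin n → ℝ :=
    fun t i => s i * Real.sqrt ((1 - t) * v i ^ 2 + t * w i ^ 2) with hz
  have hssq : ∀ i, s i ^ 2 = 1 := by
    intro i; by_cases h : v i + w i < 0 <;> simp [hs, h]
  have hin : ∀ t : ℝ, 0 ≤ t → t ≤ 1 → ∀ i,
      z t i ^ 2 = (1 - t) * v i ^ 2 + t * w i ^ 2 := by
    intro t ht0 ht1 i
    have hnn : 0 ≤ (1 - t) * v i ^ 2 + t * w i ^ 2 := by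
      have h1 : 0 ≤ 1 - t := by linarith
      positivity
    rw [hz]; simp only
    rw [mul_pow, hssq, one_mul, Real.sq_sqrt hnn]
  have hz0 : z 0 = v := by
    funext i
    simp only [hz, sub_zero, zero_mul, one_mul, add_zero]
    rcases lt_trichotomy (v i) 0 with h | h | h
    · have hw' : w i ≤ 0 := by nlinarith [hsign i]
      have : v i + w i < 0 := by linarith
      simp only [hs, if_pos this]
      rw [Real.sqrt_sq_eq_abs, abs_of_neg h]; ring
    · simp [h]
    · have hw' : 0 ≤ w i := by nlinarith [hsign i]
      have : ¬ (v i + w i < 0) := by linarith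
      simp only [hs, if_neg this]
      rw [Real.sqrt_sq_eq_abs, abs_of_pos h]; ring
  have hz1 : z 1 = w := by
    funext i
    simp only [hz, sub_self, zero_mul, one_mul, zero_add]
    rcases lt_trichotomy (w i) 0 with h | h | h
    · have hv' : v i ≤ 0 := by nlinarith [hsign i]
      have : v i + w i < 0 := by linarith
      simp only [hs, if_pos this]
      rw [Real.sqrt_sq_eq_abs, abs_of_neg h]; ring
    · simp [h]
    · have hv' : 0 ≤ v i := by nlinarith [hsign i]
      have : ¬ (v i + w i < 0) := by linarith
      simp only [hs, if_neg this]
      rw [Real.sqrt_sq_eq_abs, abs_of_pos h]; ring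
  have hcont : Continuous fun t : unitInterval => z (t : ℝ) := by
    apply continuous_pi
    intro i
    apply Continuous.mul continuous_const
    apply Real.continuous_sqrt.comp
    fun_prop
  have hmem : ∀ t : unitInterval, z (t : ℝ) ∈ Tset d := by
    intro t
    constructor
    · have : ∑ i, z (t : ℝ) i ^ 2
          = ∑ i, ((1 - (t : ℝ)) * v i ^ 2 + (t : ℝ) * w i ^ 2) :=
        Finset.sum_congr rfl fun i _ => hin t t.2.1 t.2.2 i
      rw [this, Finset.sum_add_distrib, ← Finset.mul_sum, ← Finset.mul_sum,
        hv.1, hw.1]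
      ring
    · have : ∑ i, d i * z (t : ℝ) i ^ 2
          = ∑ i, ((1 - (t : ℝ)) * (d i * v i ^ 2) + (t : ℝ) * (d i * w i ^ 2)) := by
        refine Finset.sum_congr rfl fun i _ => ?_
        rw [hin t t.2.1 t.2.2 i]; ring
      rw [this, Finset.sum_add_distrib, ← Finset.mul_sum, ← Finset.mul_sum,
        hv.2, hw.2]
      ring
  exact ⟨⟨⟨fun t => z (t : ℝ), hcont⟩, by simpa using hz0, by simpa using hz1⟩, hmem⟩

lemma Tset_neg {n : ℕ} {d : Fin n → ℝ} {u : Fin n → ℝ} (h : u ∈ Tset d) :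
    -u ∈ Tset d := by
  constructor
  · simpa [neg_sq] using h.1
  · simpa [neg_sq] using h.2

lemma joined_neg {n : ℕ} {d : Fin n → ℝ} {u v : Fin n → ℝ}
    (h : JoinedIn (Tset d) u v) : JoinedIn (Tset d) (-u) (-v) := by
  obtain ⟨p, hp⟩ := h
  exact ⟨p.map continuous_neg, fun t => by simpa using Tset_neg (hp t)⟩

/-- Joined up to sign. -/
def SRel {n : ℕ} (d : Fin n → ℝ) (u v : Fin n → ℝ) : Prop :=
  JoinedIn (Tset d) u v ∨ JoinedIn (Tset d) u (-v)

lemma SRel.refl {n : ℕ} {d : Fin n → ℝ} {u : Fin n → ℝ} (h : u ∈ Tset d) :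
    SRel d u u := Or.inl (JoinedIn.refl h)

lemma SRel.symm {n : ℕ} {d : Fin n → ℝ} {u v : Fin n → ℝ} (h : SRel d u v) :
    SRel d v u := by
  rcases h with h | h
  · exact Or.inl h.symm
  · right
    have := (joined_neg h).symm
    simpa using this

lemma SRel.trans {n : ℕ} {d : Fin n → ℝ} {u v w : Fin n → ℝ}
    (h1 : SRel d u v) (h2 : SRel d v w) : SRel d u w := by
  rcases h1 with h1 | h1 <;> rcases h2 with h2 | h2
  · exact Or.inl (h1.trans h2)
  · exact Or.inr (h1.trans h2)
  · right
    refine h1.trans ?_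
    simpa using joined_neg h2
  · left
    refine h1.trans ?_
    simpa using joined_neg h2

lemma SRel.neg_right {n : ℕ} {d : Fin n → ℝ} {u v : Fin n → ℝ} (h : SRel d u v) :
    SRel d u (-v) := by
  rcases h with h | h
  · exact Or.inr (by simpa using h)
  · exact Or.inl (by simpa using h)

lemma sum_single_support {n : ℕ} (k : Fin n) (f : Fin n → ℝ) (a : ℝ) :
    ∑ l, f l * (if l = k then a else 0) ^ 2 = f k * a ^ 2 := by
  rw [Finset.sum_eq_single k]
  · simp
  · intro b _ hb; simp [hb]
  · intro h; exact absurd (Finset.mem_univ k) h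

lemma sum_pair_support {n : ℕ} {i j : Fin n} (hij : i ≠ j) (f : Fin n → ℝ) (a b : ℝ) :
    ∑ l, f l * (if l = i then a else if l = j then b else 0) ^ 2
      = f i * a ^ 2 + f j * b ^ 2 := by
  classical
  rw [← Finset.sum_subset (Finset.subset_univ ({i, j} : Finset (Fin n)))]
  · rw [Finset.sum_pair hij]
    simp [hij, Ne.symm hij]
  · intro l _ hl
    simp only [Finset.mem_insert, Finset.mem_singleton, not_or] at hl
    simp [hl.1, hl.2]

/-- the canonical two-point supported element -/
noncomputable def wvec {n : ℕ} (d : Fin n → ℝ) (i j : Fin n) (e1 e2 : ℝ) : Fin n → ℝ :=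
  fun l => if l = i then e1 * Real.sqrt (-d j / (d i - d j))
    else if l = j then e2 * Real.sqrt (d i / (d i - d j)) else 0

lemma wvec_mem {n : ℕ} (d : Fin n → ℝ) {i j : Fin n} (hij : i ≠ j)
    (hi : 0 < d i) (hj : d j < 0) {e1 e2 : ℝ} (h1 : e1 ^ 2 = 1) (h2 : e2 ^ 2 = 1) :
    wvec d i j e1 e2 ∈ Tset d := by
  have hden : 0 < d i - d j := by linarith
  have hjpos : 0 < -d j := by linarith
  have ha : Real.sqrt (-d j / (d i - d j)) ^ 2 = -d j / (d i - d j) :=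
    Real.sq_sqrt (by positivity)
  have hb : Real.sqrt (d i / (d i - d j)) ^ 2 = d i / (d i - d j) :=
    Real.sq_sqrt (by positivity)
  constructor
  · have := sum_pair_support hij (fun _ => (1:ℝ))
      (e1 * Real.sqrt (-d j / (d i - d j))) (e2 * Real.sqrt (d i / (d i - d j)))
    rw [show (∑ l, (wvec d i j e1 e2 l) ^ 2)
        = ∑ l, (fun _ => (1:ℝ)) l * (if l = i then e1 * Real.sqrt (-d j / (d i - d j))
          else if l = j then e2 * Real.sqrt (d i / (d i - d j)) else 0) ^ 2 by
      refine Finset.sum_congr rfl fun l _ => ?_; rw [one_mul]; rfl]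
    rw [this, mul_pow, mul_pow, ha, hb, h1, h2]
    field_simp
    ring
  · rw [show (∑ l, d l * (wvec d i j e1 e2 l) ^ 2)
        = ∑ l, d l * (if l = i then e1 * Real.sqrt (-d j / (d i - d j))
          else if l = j then e2 * Real.sqrt (d i / (d i - d j)) else 0) ^ 2 by rfl]
    rw [sum_pair_support hij, mul_pow, mul_pow, ha, hb, h1, h2]
    field_simp
    ring

lemma wvec_neg {n : ℕ} (d : Fin n → ℝ) (i j : Fin n) (e1 e2 : ℝ) :
    wvec d i j (-e1) (-e2) = -(wvec d i j e1 e2) := by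
  funext l
  simp only [wvec, Pi.neg_apply]
  split_ifs <;> ring

lemma chain_main {n : ℕ} (hn : 3 ≤ n) (d : Fin n → ℝ) (x y : Fin n → ℝ)
    (hx : x ∈ Tset d) (hy : y ∈ Tset d) : SRel d x y := by
  classical
  by_cases hzero : ∃ k, d k = 0
  · -- case of a zero coefficient
    obtain ⟨k, hk⟩ := hzero
    have emem : ∀ c : ℝ, c ^ 2 = 1 → (fun l => if l = k then c else 0) ∈ Tset d := by
      intro c hc
      constructor
      · rw [show (∑ l, (if l = k then c else 0) ^ 2 : ℝ)
            = ∑ l, (1:ℝ) * (if l = k then c else 0) ^ 2 by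
          exact Finset.sum_congr rfl fun l _ => (one_mul _).symm]
        simpa [hc] using sum_single_support k (fun _ => (1:ℝ)) c
      · rw [sum_single_support k d c, hk, zero_mul]
    have segx : ∀ v : Fin n → ℝ, v ∈ Tset d →
        JoinedIn (Tset d) v (fun l => if l = k then (if v k < 0 then (-1:ℝ) else 1) else 0) := by
      intro v hv
      apply seg d v _ hv (emem _ (by by_cases h : v k < 0 <;> simp [h]))
      intro l
      by_cases hlk : l = k
      · subst hlk
        by_cases h : v l < 0 <;> simp [h] <;> nlinarith
      · simp [hlk]
    have hx2 := segx x hx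
    have hy2 := segx y hy
    set c1 : ℝ := if x k < 0 then -1 else 1 with hc1
    set c2 : ℝ := if y k < 0 then -1 else 1 with hc2
    have hc1sq : c1 ^ 2 = 1 := by by_cases h : x k < 0 <;> simp [hc1, h]
    have hc2sq : c2 ^ 2 = 1 := by by_cases h : y k < 0 <;> simp [hc2, h]
    have hEE : SRel d (fun l => if l = k then c1 else 0) (fun l => if l = k then c2 else 0) := by
      rcases eq_or_ne c1 c2 with h | h
      · rw [h]; exact SRel.refl (emem c2 hc2sq)
      · have h12 : c1 = -c2 := by
          by_cases h1 : x k < 0 <;> by_cases h2 : y k < 0 <;>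
            simp [hc1, hc2, h1, h2] at h ⊢
        have : (fun l => if l = k then c1 else 0)
            = -(fun l => if l = k then c2 else 0) := by
          funext l
          by_cases hlk : l = k <;> simp [hlk, h12]
        right
        rw [← this]
        exact JoinedIn.refl (emem c1 hc1sq)
    exact SRel.trans (Or.inl hx2) (SRel.trans hEE (SRel.symm (Or.inl hy2)))
  · -- all coefficients nonzero
    push_neg at hzero
    have hxnz : ∃ l, x l ≠ 0 := by
      by_contra hall; push_neg at hall
      have := hx.1
      simp [hall] at this
    have hex : ∃ i, 0 < d i := by
      by_contra h; push_neg at h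
      obtain ⟨l0, hl0⟩ := hxnz
      have hlt : ∑ l, d l * x l ^ 2 < ∑ _l : Fin n, (0:ℝ) := by
        apply Finset.sum_lt_sum
        · intro l _
          have hdl : d l ≤ 0 := h l
          nlinarith [sq_nonneg (x l)]
        · refine ⟨l0, Finset.mem_univ l0, ?_⟩
          have hsq : 0 < x l0 ^ 2 :=
            lt_of_le_of_ne (sq_nonneg _) (Ne.symm (pow_ne_zero 2 hl0))
          have hdl : d l0 < 0 := lt_of_le_of_ne (h l0) (hzero l0)
          nlinarith
      rw [hx.2] at hlt
      simp at hlt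
    have hexn : ∃ j, d j < 0 := by
      by_contra h; push_neg at h
      obtain ⟨l0, hl0⟩ := hxnz
      have hlt : ∑ _l : Fin n, (0:ℝ) < ∑ l, d l * x l ^ 2 := by
        apply Finset.sum_lt_sum
        · intro l _
          have hdl : 0 ≤ d l := h l
          nlinarith [sq_nonneg (x l)]
        · refine ⟨l0, Finset.mem_univ l0, ?_⟩
          have hsq : 0 < x l0 ^ 2 :=
            lt_of_le_of_ne (sq_nonneg _) (Ne.symm (pow_ne_zero 2 hl0))
          have hdl : 0 < d l0 := lt_of_le_of_ne (h l0) (Ne.symm (hzero l0))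
          nlinarith
      rw [hx.2] at hlt
      simp at hlt
    obtain ⟨i, hi⟩ := hex
    obtain ⟨j, hj⟩ := hexn
    have hij : i ≠ j := by intro h; rw [h] at hi; linarith
    obtain ⟨k, hki, hkj⟩ : ∃ k : Fin n, k ≠ i ∧ k ≠ j := by
      by_contra h; push_neg at h
      have hsub : (Finset.univ : Finset (Fin n)) ⊆ {i, j} := by
        intro l _
        rcases eq_or_ne l i with h1 | h1
        · simp [h1]
        · simp [h l h1]
      have := Finset.card_le_card hsub
      have h2 : ({i, j} : Finset (Fin n)).card ≤ 2 :=
        (Finset.card_insert_le _ _).trans (by simp)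
      simp [Finset.card_univ] at this
      omega
    have hone : (1:ℝ) ^ 2 = 1 := one_pow 2
    have hnegone : (-1:ℝ) ^ 2 = 1 := by norm_num
    have hsq_of : ∀ t : ℝ, ((if t < 0 then (-1:ℝ) else 1)) ^ 2 = 1 := by
      intro t; by_cases h : t < 0 <;> simp [h]
    -- sign compat for seg into a wvec
    have segW : ∀ (p q : Fin n), p ≠ q → 0 < d p → d q < 0 →
        ∀ v : Fin n → ℝ, v ∈ Tset d →
        JoinedIn (Tset d) v
          (wvec d p q (if v p < 0 then -1 else 1) (if v q < 0 then -1 else 1)) := by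
      intro p q hpq hp hq v hv
      apply seg d v _ hv (wvec_mem d hpq hp hq (hsq_of (v p)) (hsq_of (v q)))
      intro l
      simp only [wvec]
      by_cases hlp : l = p
      · subst hlp
        by_cases h : v l < 0 <;>
          simp [h, if_pos] <;> nlinarith [Real.sqrt_nonneg (-d q / (d l - d q))]
      · by_cases hlq : l = q
        · subst hlq
          by_cases h : v l < 0 <;>
            simp [hlp, h] <;> nlinarith [Real.sqrt_nonneg (d p / (d p - d l))]
        · simp [hlp, hlq]
    -- connecting two wvecs with a common positive index
    have segWW : ∀ (p q q' : Fin n), p ≠ q → p ≠ q' → q ≠ q' →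
        0 < d p → d q < 0 → d q' < 0 → ∀ e2 e2' : ℝ, e2 ^ 2 = 1 → e2' ^ 2 = 1 →
        JoinedIn (Tset d) (wvec d p q 1 e2) (wvec d p q' 1 e2') := by
      intro p q q' hpq hpq' hqq' hp hq hq' e2 e2' he2 he2'
      apply seg d _ _ (wvec_mem d hpq hp hq hone he2) (wvec_mem d hpq' hp hq' hone he2')
      intro l
      simp only [wvec]
      by_cases hlp : l = p
      · subst hlp
        rw [if_pos rfl, if_pos rfl, one_mul, one_mul]
        exact mul_nonneg (Real.sqrt_nonneg _) (Real.sqrt_nonneg _)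
      · by_cases hlq : l = q
        · subst hlq
          simp [hlp, hqq', if_pos]
        · by_cases hlq' : l = q'
          · subst hlq'
            simp [hlp, hlq]
          · simp [hlp, hlq, hlq']
    -- connecting two wvecs with a common negative index
    have segWW' : ∀ (p p' q : Fin n), p ≠ q → p' ≠ q → p ≠ p' →
        0 < d p → 0 < d p' → d q < 0 → ∀ e1 e1' : ℝ, e1 ^ 2 = 1 → e1' ^ 2 = 1 →
        JoinedIn (Tset d) (wvec d p q e1 1) (wvec d p' q e1' 1) := by
      intro p p' q hpq hp'q hpp' hp hp' hq e1 e1' he1 he1'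
      apply seg d _ _ (wvec_mem d hpq hp hq he1 hone) (wvec_mem d hp'q hp' hq he1' hone)
      intro l
      simp only [wvec]
      by_cases hlq : l = q
      · subst hlq
        rw [if_neg (Ne.symm hpq), if_neg (Ne.symm hp'q), if_pos rfl, if_pos rfl, one_mul, one_mul]
        exact mul_nonneg (Real.sqrt_nonneg _) (Real.sqrt_nonneg _)
      · by_cases hlp : l = p
        · subst hlp
          simp [hlq, hpp']
        · by_cases hlp' : l = p'
          · subst hlp'
            simp [hlq, hlp]
          · simp [hlq, hlp, hlp']
    -- the flip
    have hWmem : wvec d i j 1 1 ∈ Tset d := wvec_mem d hij hi hj hone hone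
    have hflip : SRel d (wvec d i j 1 1) (wvec d i j 1 (-1)) := by
      rcases lt_or_gt_of_ne (hzero k) with hdk | hdk
      · -- d k < 0 : flip via wvec d i k
        left
        exact (segWW i j k hij (Ne.symm hki) (Ne.symm hkj) hi hj hdk
            1 1 hone hone).trans
          (segWW i k j (Ne.symm hki) hij hkj hi hdk hj
            1 (-1) hone hnegone)
      · -- d k > 0 : flip via wvec d k j
        right
        have hneg : wvec d i j (-1) 1 = -(wvec d i j 1 (-1)) := by
          have h := wvec_neg d i j 1 (-1)
          simpa using h
        rw [← hneg]
        exact (segWW' i k j hij hkj (Ne.symm hki) hi hdk hj 1 1 hone hone).trans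
          (segWW' k i j hkj hij hki hdk hi hj 1 (-1) hone hnegone)
    have allW : ∀ e1 e2 : ℝ, (e1 = 1 ∨ e1 = -1) → (e2 = 1 ∨ e2 = -1) →
        SRel d (wvec d i j 1 1) (wvec d i j e1 e2) := by
      intro e1 e2 h1 h2
      rcases h1 with rfl | rfl <;> rcases h2 with rfl | rfl
      · exact SRel.refl hWmem
      · exact hflip
      · have hneg : wvec d i j (-1) 1 = -(wvec d i j 1 (-1)) := by
          have h := wvec_neg d i j 1 (-1)
          simpa using h
        rw [hneg]
        exact SRel.neg_right hflip
      · rw [wvec_neg d i j 1 1]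
        exact SRel.neg_right (SRel.refl hWmem)
    have hxW := segW i j hij hi hj x hx
    have hyW := segW i j hij hi hj y hy
    have hor : ∀ t : ℝ, (if t < 0 then (-1:ℝ) else 1) = 1 ∨ (if t < 0 then (-1:ℝ) else 1) = -1 := by
      intro t; by_cases h : t < 0 <;> simp [h]
    have hx3 : SRel d x (wvec d i j 1 1) :=
      SRel.trans (Or.inl hxW) (SRel.symm (allW _ _ (hor (x i)) (hor (x j))))
    have hy3 : SRel d (wvec d i j 1 1) y :=
      SRel.trans (allW _ _ (hor (y i)) (hor (y j))) (SRel.symm (Or.inl hyW))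
    exact SRel.trans hx3 hy3

section IVT

lemma qcont {n : ℕ} (R : Matrix (Fin n) (Fin n) ℝ) :
    Continuous fun z : Fin n → ℝ => z ⬝ᵥ (R *ᵥ z) := by
  simp only [dotProduct, mulVec]
  apply continuous_finset_sum
  intro i _
  exact (continuous_apply i).mul
    (continuous_finset_sum _ fun j _ => continuous_const.mul (continuous_apply j))

lemma ivt_joined {α : Type*} [TopologicalSpace α] {S : Set α} (f : α → ℝ)
    (hf : Continuous f) {x y : α} (h : JoinedIn S x y) (r : ℝ)
    (hr : r ∈ Set.uIcc (f x) (f y)) : ∃ u ∈ S, f u = r := by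
  obtain ⟨p, hp⟩ := h
  have hconn : IsPreconnected (Set.range p) := isPreconnected_range p.continuous
  have hx : x ∈ Set.range ⇑p := ⟨0, p.source⟩
  have hy : y ∈ Set.range ⇑p := ⟨1, p.target⟩
  rcases le_total (f x) (f y) with hle | hle
  · rw [Set.uIcc_of_le hle] at hr
    obtain ⟨u, hu, hur⟩ := hconn.intermediate_value hx hy hf.continuousOn hr
    obtain ⟨t, ht⟩ := hu
    exact ⟨p t, hp t, ht ▸ hur⟩
  · rw [Set.uIcc_of_ge hle] at hr
    obtain ⟨u, hu, hur⟩ := hconn.intermediate_value hy hx hf.continuousOn hr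
    obtain ⟨t, ht⟩ := hu
    exact ⟨p t, hp t, ht ▸ hur⟩

lemma dot_self_eq_sum_sq {n : ℕ} (z : Fin n → ℝ) : z ⬝ᵥ z = ∑ i, z i ^ 2 := by
  simp [dotProduct, sq]

lemma dot_diagonal_eq {n : ℕ} (d : Fin n → ℝ) (z : Fin n → ℝ) :
    z ⬝ᵥ (diagonal d *ᵥ z) = ∑ i, d i * z i ^ 2 := by
  simp only [dotProduct, mulVec_diagonal]
  exact Finset.sum_congr rfl fun i _ => by ring

lemma diag_key {n : ℕ} (hn : 3 ≤ n) (d : Fin n → ℝ) (R : Matrix (Fin n) (Fin n) ℝ)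
    (x y : Fin n → ℝ) (hx : x ∈ Tset d) (hy : y ∈ Tset d) (r : ℝ)
    (hr : r ∈ Set.uIcc (x ⬝ᵥ (R *ᵥ x)) (y ⬝ᵥ (R *ᵥ y))) :
    ∃ z ∈ Tset d, z ⬝ᵥ (R *ᵥ z) = r := by
  rcases chain_main hn d x y hx hy with h | h
  · exact ivt_joined _ (qcont R) h r hr
  · apply ivt_joined _ (qcont R) h r
    have : (-y) ⬝ᵥ (R *ᵥ (-y)) = y ⬝ᵥ (R *ᵥ y) := by
      rw [mulVec_neg, neg_dotProduct, dotProduct_neg, neg_neg]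
    rw [this]
    exact hr

end IVT

section Transfer

lemma adj_dot {n : ℕ} (M : Matrix (Fin n) (Fin n) ℝ) (v w : Fin n → ℝ) :
    (M *ᵥ v) ⬝ᵥ w = v ⬝ᵥ (Mᵀ *ᵥ w) := by
  simp only [dotProduct, mulVec, transpose_apply, Finset.sum_mul, Finset.mul_sum]
  rw [Finset.sum_comm]
  exact Finset.sum_congr rfl fun i _ => Finset.sum_congr rfl fun j _ => by ring

lemma conj_dot {n : ℕ} (U : Matrix (Fin n) (Fin n) ℝ) (M : Matrix (Fin n) (Fin n) ℝ)
    (v : Fin n → ℝ) :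
    (Uᵀ *ᵥ v) ⬝ᵥ (M *ᵥ (Uᵀ *ᵥ v)) = v ⬝ᵥ ((U * M * Uᵀ) *ᵥ v) := by
  rw [← mulVec_mulVec, ← mulVec_mulVec]
  rw [adj_dot Uᵀ v (M *ᵥ (Uᵀ *ᵥ v)), transpose_transpose]

lemma key_lemma {n : ℕ} (hn : 3 ≤ n) (Q R : Matrix (Fin n) (Fin n) ℝ)
    (hQ : Q.IsHermitian) (x y : Fin n → ℝ)
    (hx1 : x ⬝ᵥ x = 1) (hy1 : y ⬝ᵥ y = 1)
    (hxQ : x ⬝ᵥ (Q *ᵥ x) = 0) (hyQ : y ⬝ᵥ (Q *ᵥ y) = 0)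
    (r : ℝ) (hr : r ∈ Set.uIcc (x ⬝ᵥ (R *ᵥ x)) (y ⬝ᵥ (R *ᵥ y))) :
    ∃ z : Fin n → ℝ, z ⬝ᵥ z = 1 ∧ z ⬝ᵥ (Q *ᵥ z) = 0 ∧ z ⬝ᵥ (R *ᵥ z) = r := by
  classical
  set U : Matrix (Fin n) (Fin n) ℝ := (hQ.eigenvectorUnitary : Matrix (Fin n) (Fin n) ℝ)
    with hUdef
  have hstar : star U = Uᵀ := by
    rw [star_eq_conjTranspose, conjTranspose_eq_transpose_of_trivial]
  have hU1 : U * Uᵀ = 1 := by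
    rw [← hstar]; exact (Matrix.mem_unitaryGroup_iff).mp hQ.eigenvectorUnitary.2
  have hU2 : Uᵀ * U = 1 := by
    rw [← hstar]; exact (Matrix.mem_unitaryGroup_iff').mp hQ.eigenvectorUnitary.2
  set d : Fin n → ℝ := hQ.eigenvalues with hddef
  have hspec : Q = U * diagonal d * Uᵀ := by
    have h := hQ.spectral_theorem
    have h4 : (RCLike.ofReal ∘ hQ.eigenvalues : Fin n → ℝ) = d := by ext i; simp [hddef]
    rw [← hstar, ← h4]
    exact h
  -- conjugation identities
  have hconj1 : ∀ v : Fin n → ℝ, (Uᵀ *ᵥ v) ⬝ᵥ (Uᵀ *ᵥ v) = v ⬝ᵥ v := by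
    intro v
    have := conj_dot U 1 v
    rwa [one_mulVec, mul_one, hU1, one_mulVec] at this
  have hconjQ : ∀ v : Fin n → ℝ, (Uᵀ *ᵥ v) ⬝ᵥ (diagonal d *ᵥ (Uᵀ *ᵥ v)) = v ⬝ᵥ (Q *ᵥ v) := by
    intro v
    rw [conj_dot U (diagonal d) v, ← hspec]
  have hconjR : ∀ v : Fin n → ℝ,
      (Uᵀ *ᵥ v) ⬝ᵥ ((Uᵀ * R * U) *ᵥ (Uᵀ *ᵥ v)) = v ⬝ᵥ (R *ᵥ v) := by
    intro v
    rw [conj_dot U (Uᵀ * R * U) v]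
    have : U * (Uᵀ * R * U) * Uᵀ = R := by
      rw [show U * (Uᵀ * R * U) * Uᵀ = (U * Uᵀ) * R * (U * Uᵀ) by
        simp only [Matrix.mul_assoc], hU1]
      simp
    rw [this]
  -- membership in Tset
  have hmem : ∀ v : Fin n → ℝ, v ⬝ᵥ v = 1 → v ⬝ᵥ (Q *ᵥ v) = 0 → (Uᵀ *ᵥ v) ∈ Tset d := by
    intro v h1 h2
    constructor
    · rw [← dot_self_eq_sum_sq, hconj1, h1]
    · rw [← dot_diagonal_eq, hconjQ, h2]
  have hrr : r ∈ Set.uIcc ((Uᵀ *ᵥ x) ⬝ᵥ ((Uᵀ * R * U) *ᵥ (Uᵀ *ᵥ x)))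
      ((Uᵀ *ᵥ y) ⬝ᵥ ((Uᵀ * R * U) *ᵥ (Uᵀ *ᵥ y))) := by
    rw [hconjR x, hconjR y]; exact hr
  obtain ⟨z', hz'mem, hz'r⟩ := diag_key hn d (Uᵀ * R * U) (Uᵀ *ᵥ x) (Uᵀ *ᵥ y)
    (hmem x hx1 hxQ) (hmem y hy1 hyQ) r hrr
  refine ⟨U *ᵥ z', ?_, ?_, ?_⟩
  · have hz : Uᵀ *ᵥ (U *ᵥ z') = z' := by
      rw [mulVec_mulVec, hU2, one_mulVec]
    have := hconj1 (U *ᵥ z')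
    rw [hz] at this
    rw [← this, dot_self_eq_sum_sq]
    exact hz'mem.1
  · have hz : Uᵀ *ᵥ (U *ᵥ z') = z' := by
      rw [mulVec_mulVec, hU2, one_mulVec]
    have := hconjQ (U *ᵥ z')
    rw [hz] at this
    rw [← this, dot_diagonal_eq]
    exact hz'mem.2
  · have hz : Uᵀ *ᵥ (U *ᵥ z') = z' := by
      rw [mulVec_mulVec, hU2, one_mulVec]
    have := hconjR (U *ᵥ z')
    rw [hz] at this
    rw [← this]
    exact hz'r

end Transfer

lemma comb_expand {n : ℕ} (A B : Matrix (Fin n) (Fin n) ℝ) (α β c : ℝ)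
    (z : Fin n → ℝ) (hz : z ⬝ᵥ z = 1) :
    z ⬝ᵥ ((α • A + β • B - c • (1 : Matrix (Fin n) (Fin n) ℝ)) *ᵥ z)
      = α * (z ⬝ᵥ (A *ᵥ z)) + β * (z ⬝ᵥ (B *ᵥ z)) - c := by
  rw [sub_mulVec, add_mulVec, smul_mulVec, smul_mulVec, smul_mulVec,
    one_mulVec, dotProduct_sub, dotProduct_add, dotProduct_smul, dotProduct_smul,
    dotProduct_smul, smul_eq_mul, smul_eq_mul, smul_eq_mul, hz, mul_one]

lemma comb_expand2 {n : ℕ} (A B : Matrix (Fin n) (Fin n) ℝ) (α β : ℝ)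
    (z : Fin n → ℝ) :
    z ⬝ᵥ ((β • A - α • B) *ᵥ z)
      = β * (z ⬝ᵥ (A *ᵥ z)) - α * (z ⬝ᵥ (B *ᵥ z)) := by
  rw [sub_mulVec, smul_mulVec, smul_mulVec, dotProduct_sub,
    dotProduct_smul, dotProduct_smul, smul_eq_mul, smul_eq_mul]

lemma comb_mem_uIcc {a b s1 s2 : ℝ} (ha : 0 ≤ a) (hb : 0 ≤ b) (hab : a + b = 1) :
    a * s1 + b * s2 ∈ Set.uIcc s1 s2 := by
  have hba : a = 1 - b := by linarith
  subst hba
  rw [Set.mem_uIcc]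
  rcases le_total s1 s2 with h | h
  · left
    constructor <;> nlinarith [mul_nonneg hb (sub_nonneg.mpr h), mul_nonneg ha (sub_nonneg.mpr h)]
  · right
    constructor <;> nlinarith [mul_nonneg hb (sub_nonneg.mpr h), mul_nonneg ha (sub_nonneg.mpr h)]

theorem brickman {n : ℕ} (hn : 3 ≤ n) (A B : Matrix (Fin n) (Fin n) ℝ)
    (hA : Aᵀ = A) (hB : Bᵀ = B) :
    Convex ℝ {p : ℝ × ℝ | ∃ x : Fin n → ℝ, x ⬝ᵥ x = 1 ∧
      p = (x ⬝ᵥ (A *ᵥ x), x ⬝ᵥ (B *ᵥ x))} := by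
  rintro p ⟨x, hx1, hpx⟩ q ⟨y, hy1, hqy⟩ a b ha hb hab
  by_cases hpq : p = q
  · rw [← hpq, ← add_smul, hab, one_smul]
    exact ⟨x, hx1, hpx⟩
  · set α : ℝ := q.2 - p.2 with hα
    set β : ℝ := p.1 - q.1 with hβ
    have hp1 : p.1 = x ⬝ᵥ (A *ᵥ x) := by rw [hpx]
    have hp2 : p.2 = x ⬝ᵥ (B *ᵥ x) := by rw [hpx]
    have hq1 : q.1 = y ⬝ᵥ (A *ᵥ y) := by rw [hqy]
    have hq2 : q.2 = y ⬝ᵥ (B *ᵥ y) := by rw [hqy]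
    have hss : 0 < α ^ 2 + β ^ 2 := by
      rcases Prod.ext_iff.not.mp hpq with h
      by_contra hc
      push_neg at hc
      have h1 : α = 0 ∧ β = 0 := by
        constructor <;> nlinarith [sq_nonneg α, sq_nonneg β]
      apply h
      constructor
      · have := h1.2; rw [hβ] at this; linarith
      · have := h1.1; rw [hα] at this; linarith
    set c : ℝ := α * p.1 + β * p.2 with hc
    have hcy : α * q.1 + β * q.2 = c := by rw [hc, hα, hβ]; ring
    set Q : Matrix (Fin n) (Fin n) ℝ := α • A + β • B - c • (1 : Matrix (Fin n) (Fin n) ℝ)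
      with hQ
    have hQHerm : Q.IsHermitian := by
      show Qᴴ = Q
      rw [conjTranspose_eq_transpose_of_trivial, hQ, transpose_sub, transpose_add,
        transpose_smul, transpose_smul, transpose_smul, transpose_one, hA, hB]
    set R : Matrix (Fin n) (Fin n) ℝ := β • A - α • B with hR
    have hxQ : x ⬝ᵥ (Q *ᵥ x) = 0 := by
      rw [hQ, comb_expand A B α β c x hx1, ← hp1, ← hp2, hc]; ring
    have hyQ : y ⬝ᵥ (Q *ᵥ y) = 0 := by
      rw [hQ, comb_expand A B α β c y hy1, ← hq1, ← hq2, ← hcy]; ring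
    have hRx : x ⬝ᵥ (R *ᵥ x) = β * p.1 - α * p.2 := by
      rw [hR, comb_expand2 A B α β x, ← hp1, ← hp2]
    have hRy : y ⬝ᵥ (R *ᵥ y) = β * q.1 - α * q.2 := by
      rw [hR, comb_expand2 A B α β y, ← hq1, ← hq2]
    set r : ℝ := a * (β * p.1 - α * p.2) + b * (β * q.1 - α * q.2) with hrdef
    have hr : r ∈ Set.uIcc (x ⬝ᵥ (R *ᵥ x)) (y ⬝ᵥ (R *ᵥ y)) := by
      rw [hRx, hRy, hrdef]
      exact comb_mem_uIcc ha hb hab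
    obtain ⟨z, hz1, hzQ, hzR⟩ := key_lemma hn Q R hQHerm x y hx1 hy1 hxQ hyQ r hr
    refine ⟨z, hz1, ?_⟩
    set u : ℝ := z ⬝ᵥ (A *ᵥ z) with hu
    set v : ℝ := z ⬝ᵥ (B *ᵥ z) with hv
    have heq1 : α * u + β * v = α * (a * p.1 + b * q.1) + β * (a * p.2 + b * q.2) := by
      have h0 : α * u + β * v - c = 0 := by
        rw [← comb_expand A B α β c z hz1]; exact hzQ
      have hcx : α * p.1 + β * p.2 = c := hc.symm
      linear_combination h0 - a * hcx - b * hcy - c * hab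
    have heq2 : β * u - α * v = β * (a * p.1 + b * q.1) - α * (a * p.2 + b * q.2) := by
      have h0 : β * u - α * v = r := by
        rw [← comb_expand2 A B α β z]; exact hzR
      rw [h0, hrdef]; ring
    have h3 : (α ^ 2 + β ^ 2) * (u - (a * p.1 + b * q.1)) = 0 := by
      linear_combination α * heq1 + β * heq2
    have h4 : (α ^ 2 + β ^ 2) * (v - (a * p.2 + b * q.2)) = 0 := by
      linear_combination β * heq1 - α * heq2
    have hu' : u = a * p.1 + b * q.1 := by
      rcases mul_eq_zero.mp h3 with h | h
      · exact absurd h (ne_of_gt hss)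
      · linarith
    have hv' : v = a * p.2 + b * q.2 := by
      rcases mul_eq_zero.mp h4 with h | h
      · exact absurd h (ne_of_gt hss)
      · linarith
    have : (a • p + b • q) = (u, v) := by
      rw [Prod.ext_iff]
      constructor
      · simp [hu', Prod.smul_fst, smul_eq_mul]
      · simp [hv', Prod.smul_snd, smul_eq_mul]
    rw [this]

end BrickmanMachinery

/-- the feasibility region `FR = {(⟨f, L f⟩, ⟨f̂, L f̂⟩) : ‖f‖ = 1}` is convex
when `N ≥ 3`. -/
theorem feasibility_region_convex {N : ℕ} (hN : 3 ≤ N) (G : GraphLaplacian N)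
    (χ : Matrix (Fin N) (Fin N) ℝ) (lam : Fin N → ℝ)
    (hχ : χᵀ * χ = 1)
    (hdiag : χᵀ * G.L * χ = Matrix.diagonal lam) :
    Convex ℝ {p : ℝ × ℝ | ∃ f : Fin N → ℝ, f ⬝ᵥ f = 1 ∧
      p = (f ⬝ᵥ (G.L *ᵥ f), (χᵀ *ᵥ f) ⬝ᵥ (G.L *ᵥ (χᵀ *ᵥ f)))} := by
  have hLsym : G.Lᵀ = G.L := by
    ext i j
    simp only [transpose_apply, GraphLaplacian.L]
    by_cases h : i = j
    · subst h; rfl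
    · rw [if_neg (Ne.symm h), if_neg h, G.symm i j]
  have hχ' : χ * χᵀ = 1 := mul_eq_one_comm.mp hχ
  have hLconj : χ * (diagonal lam) * χᵀ = G.L := by
    rw [← hdiag,
      show χ * (χᵀ * G.L * χ) * χᵀ = (χ * χᵀ) * G.L * (χ * χᵀ) by
        simp only [Matrix.mul_assoc], hχ']
    simp
  have hset : {p : ℝ × ℝ | ∃ f : Fin N → ℝ, f ⬝ᵥ f = 1 ∧
      p = (f ⬝ᵥ (G.L *ᵥ f), (χᵀ *ᵥ f) ⬝ᵥ (G.L *ᵥ (χᵀ *ᵥ f)))}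
      = {p : ℝ × ℝ | ∃ g : Fin N → ℝ, g ⬝ᵥ g = 1 ∧
      p = (g ⬝ᵥ (diagonal lam *ᵥ g), g ⬝ᵥ (G.L *ᵥ g))} := by
    ext p
    constructor
    · rintro ⟨f, hf1, rfl⟩
      refine ⟨χᵀ *ᵥ f, ?_, ?_⟩
      · have h := conj_dot χ 1 f
        rwa [one_mulVec, Matrix.mul_one, hχ', one_mulVec, hf1] at h
      · have h1 : (χᵀ *ᵥ f) ⬝ᵥ (diagonal lam *ᵥ (χᵀ *ᵥ f)) = f ⬝ᵥ (G.L *ᵥ f) := by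
          rw [conj_dot χ (diagonal lam) f, hLconj]
        rw [h1]
    · rintro ⟨g, hg1, rfl⟩
      refine ⟨χ *ᵥ g, ?_, ?_⟩
      · have h := conj_dot χᵀ 1 g
        rw [transpose_transpose] at h
        rwa [one_mulVec, Matrix.mul_one, hχ, one_mulVec, hg1] at h
      · have hgf : χᵀ *ᵥ (χ *ᵥ g) = g := by
          rw [mulVec_mulVec, hχ, one_mulVec]
        have h1 : (χ *ᵥ g) ⬝ᵥ (G.L *ᵥ (χ *ᵥ g)) = g ⬝ᵥ (diagonal lam *ᵥ g) := by
          have h := conj_dot χᵀ G.L g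
          rw [transpose_transpose] at h
          rw [h, hdiag]
        rw [hgf, h1]
  rw [hset]
  exact brickman hN (diagonal lam) G.L (diagonal_transpose lam) hLsym
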